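/- Let d_1, d_2 be complex numbers with arg(d_1), arg(d_2) ∈ [0, θ] for some θ ∈ [0, π/2]. Then |d_1| + |d_2| ≤ sec(θ/2) · |d_1 + d_2|. -/

import Mathlib

lemma re_rot_ge (θ : ℝ) (hθ0 : 0 ≤ θ) (hθ : θ ≤ Real.pi / 2) (d : ℂ)
    (ha : 0 ≤ d.arg) (hb : d.arg ≤ θ) :
    Real.cos (θ / 2) * ‖d‖ ≤ (Complex.exp ((-(θ / 2) : ℝ) * Complex.I) * d).re := by
  have key : Complex.exp ((-(θ / 2) : ℝ) * Complex.I) * d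
      = (‖d‖ : ℂ) * Complex.exp (((d.arg - θ / 2 : ℝ)) * Complex.I) := by
    conv_lhs => rw [show d = (‖d‖ : ℂ) * Complex.exp (d.arg * Complex.I) from
      (Complex.norm_mul_exp_arg_mul_I d).symm]
    rw [mul_comm, mul_assoc, ← Complex.exp_add]
    push_cast
    ring_nf
  rw [key]
  have hre : ((‖d‖ : ℂ) * Complex.exp (((d.arg - θ / 2 : ℝ)) * Complex.I)).re
      = ‖d‖ * Real.cos (d.arg - θ / 2) := by
    simp only [Complex.mul_re, Complex.ofReal_re, Complex.ofReal_im, zero_mul, sub_zero,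
      Complex.exp_ofReal_mul_I_re]
  rw [hre]
  have habs : |d.arg - θ / 2| ≤ θ / 2 := by
    rw [abs_le]; constructor <;> linarith
  have hpi := Real.pi_pos
  have hcos : Real.cos (θ / 2) ≤ Real.cos (d.arg - θ / 2) := by
    rw [← Real.cos_abs (d.arg - θ / 2)]
    exact Real.cos_le_cos_of_nonneg_of_le_pi (abs_nonneg _) (by linarith) habs
  have := norm_nonneg d
  nlinarith

theorem secant_bound_two_complex (θ : ℝ) (hθ0 : 0 ≤ θ) (hθ : θ ≤ Real.pi / 2)
    (d₁ d₂ : ℂ)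
    (h1 : 0 ≤ d₁.arg ∧ d₁.arg ≤ θ) (h2 : 0 ≤ d₂.arg ∧ d₂.arg ≤ θ) :
    ‖d₁‖ + ‖d₂‖ ≤ (1 / Real.cos (θ / 2)) * ‖d₁ + d₂‖ := by
  have hpi := Real.pi_pos
  have hc : 0 < Real.cos (θ / 2) :=
    Real.cos_pos_of_mem_Ioo ⟨by linarith, by linarith⟩
  have h1' := re_rot_ge θ hθ0 hθ d₁ h1.1 h1.2
  have h2' := re_rot_ge θ hθ0 hθ d₂ h2.1 h2.2
  have hre : (Complex.exp ((-(θ / 2) : ℝ) * Complex.I) * (d₁ + d₂)).re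
      ≤ ‖d₁ + d₂‖ := by
    calc (Complex.exp ((-(θ / 2) : ℝ) * Complex.I) * (d₁ + d₂)).re
        ≤ ‖Complex.exp ((-(θ / 2) : ℝ) * Complex.I) * (d₁ + d₂)‖ :=
          Complex.re_le_norm _
      _ = ‖d₁ + d₂‖ := by
          rw [norm_mul, Complex.norm_exp_ofReal_mul_I, one_mul]
  rw [one_div, ← div_eq_inv_mul, le_div_iff₀ hc]
  have hsplit : (Complex.exp ((-(θ / 2) : ℝ) * Complex.I) * (d₁ + d₂)).re
      = (Complex.exp ((-(θ / 2) : ℝ) * Complex.I) * d₁).re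
        + (Complex.exp ((-(θ / 2) : ℝ) * Complex.I) * d₂).re := by
    rw [mul_add, Complex.add_re]
  nlinarith
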